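/- Let Q ⊂ ℝᵖ be a convex polyhedron Q = {d : ⟨a_j, d⟩ ≤ b_j, j = 1,…,r}. Then there exists a constant β ≥ 0 such that for every d ∈ Q and every μ ∈ N_Q(d) (convex normal cone) there exist coefficients ν_j ≥ 0, j ∈ J(d) := {j : ⟨a_j,d⟩ = b_j}, with μ = Σ_{j∈J(d)} ν_j a_j and Σ_{j∈J(d)} ν_j ≤ β‖μ‖. -/

import Mathlib

open scoped RealInnerProductSpace

open Finset


noncomputable section PolyFarkasAux

/-- coefficient-to-combination linear map -/
def pufCombMap {n : ℕ} {ι : Type*} [Fintype ι] (v : ι → EuclideanSpace ℝ (Fin n)) :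
    (ι → ℝ) →ₗ[ℝ] EuclideanSpace ℝ (Fin n) where
  toFun g := ∑ i, g i • v i
  map_add' g h := by simp [add_smul, Finset.sum_add_distrib]
  map_smul' c g := by simp [smul_smul, Finset.smul_sum]

lemma pufCombMap_ker {n : ℕ} {ι : Type*} [Fintype ι] (v : ι → EuclideanSpace ℝ (Fin n))
    (hv : LinearIndependent ℝ v) : LinearMap.ker (pufCombMap v) = ⊥ := by
  rw [LinearMap.ker_eq_bot']
  intro g hg
  funext i
  exact Fintype.linearIndependent_iff.mp hv g hg i

lemma pufCombMap_bound {n : ℕ} {ι : Type*} [Fintype ι] (v : ι → EuclideanSpace ℝ (Fin n))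
    (hv : LinearIndependent ℝ v) :
    ∃ c : ℝ, 0 ≤ c ∧ ∀ g : ι → ℝ, ‖g‖ ≤ c * ‖∑ i, g i • v i‖ := by
  have hinj : Function.Injective (pufCombMap v) :=
    LinearMap.ker_eq_bot.mp (pufCombMap_ker v hv)
  let e := LinearEquiv.ofInjective (pufCombMap v) hinj
  let f : ↥(LinearMap.range (pufCombMap v)) →L[ℝ] (ι → ℝ) :=
    LinearMap.toContinuousLinearMap e.symm.toLinearMap
  refine ⟨‖f‖, f.opNorm_nonneg, fun g => ?_⟩
  have h1 : f (e g) = g := by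
    simpa [f] using e.symm_apply_apply g
  have h2 : ‖e g‖ = ‖∑ i, g i • v i‖ := by
    have : ((e g : ↥(LinearMap.range (pufCombMap v))) : EuclideanSpace ℝ (Fin n))
        = ∑ i, g i • v i := by
      rfl
    rw [← this]
    rfl
  calc ‖g‖ = ‖f (e g)‖ := by rw [h1]
    _ ≤ ‖f‖ * ‖e g‖ := f.le_opNorm _
    _ = ‖f‖ * ‖∑ i, g i • v i‖ := by rw [h2]

lemma pufCombMap_isClosed {n : ℕ} {ι : Type*} [Fintype ι] (v : ι → EuclideanSpace ℝ (Fin n))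
    (hv : LinearIndependent ℝ v) :
    IsClosed {x : EuclideanSpace ℝ (Fin n) | ∃ g : ι → ℝ, (∀ i, 0 ≤ g i) ∧ x = ∑ i, g i • v i} := by
  have himg : {x : EuclideanSpace ℝ (Fin n) | ∃ g : ι → ℝ, (∀ i, 0 ≤ g i) ∧ x = ∑ i, g i • v i}
      = pufCombMap v '' {g | ∀ i, 0 ≤ g i} := by
    ext x
    constructor
    · rintro ⟨g, hg, rfl⟩; exact ⟨g, hg, rfl⟩
    · rintro ⟨g, hg, rfl⟩; exact ⟨g, hg, rfl⟩
  rw [himg]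
  have hclosed : IsClosed {g : ι → ℝ | ∀ i, 0 ≤ g i} := by
    have : {g : ι → ℝ | ∀ i, 0 ≤ g i} = ⋂ i, {g : ι → ℝ | 0 ≤ g i} := by
      ext g; simp
    rw [this]
    exact isClosed_iInter fun i => isClosed_le continuous_const (continuous_apply i)
  exact (LinearMap.isClosedEmbedding_of_injective (pufCombMap_ker v hv)).isClosedMap _ hclosed

end PolyFarkasAux
open Finset

lemma puf_caratheodory {n r : ℕ} (a : Fin r → EuclideanSpace ℝ (Fin n)) :
    ∀ (s : Finset (Fin r)) (ν : Fin r → ℝ), (∀ j, 0 ≤ ν j) → (∀ j, ν j ≠ 0 → j ∈ s) →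
    ∃ t : Finset (Fin r), t ⊆ s ∧ LinearIndependent ℝ (fun j : ↥t => a j) ∧
      ∃ ν' : Fin r → ℝ, (∀ j, 0 ≤ ν' j) ∧ (∀ j, ν' j ≠ 0 → j ∈ t) ∧
        ∑ j, ν' j • a j = ∑ j, ν j • a j := by
  classical
  intro s
  induction s using Finset.strongInduction with
  | _ s ih =>
    intro ν hν hsupp
    set s' : Finset (Fin r) := univ.filter (fun j => ν j ≠ 0) with hs'
    by_cases hind : LinearIndependent ℝ (fun j : ↥s' => a j)
    · refine ⟨s', fun j hj => hsupp j (by simpa [hs'] using hj), hind,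
        ν, hν, fun j hj => by simp [hs', hj], rfl⟩
    · -- extract a dependence relation with a positive coefficient
      rw [Fintype.linearIndependent_iff] at hind
      push_neg at hind
      obtain ⟨c, hc0, i₀, hi₀⟩ := hind
      obtain ⟨C, hCsupp, hCsum, j₁, hj₁⟩ :
          ∃ C : Fin r → ℝ, (∀ j, C j ≠ 0 → ν j ≠ 0) ∧ (∑ j, C j • a j = 0) ∧ ∃ j, 0 < C j := by
        set C0 : Fin r → ℝ := fun j => if h : j ∈ s' then c ⟨j, h⟩ else 0 with hC0def
        have hsupp0 : ∀ j, C0 j ≠ 0 → ν j ≠ 0 := by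
          intro j hj
          have hjm : j ∈ s' := by
            by_contra hmem; simp [hC0def, hmem] at hj
          simpa [hs'] using hjm
        have hsum0 : ∑ j, C0 j • a j = 0 := by
          have h1 : ∑ j ∈ s', C0 j • a j = ∑ j, C0 j • a j :=
            Finset.sum_subset (Finset.subset_univ s') (fun j _ hj => by simp [hC0def, hj])
          have h2 : ∑ j : ↥s', C0 (j : Fin r) • a (j : Fin r) = ∑ j ∈ s', C0 j • a j :=
            Finset.sum_coe_sort s' (fun j => C0 j • a j)
          have h3 : ∑ j : ↥s', C0 (j : Fin r) • a (j : Fin r) = ∑ j : ↥s', c j • a (j : Fin r) := by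
            refine Finset.sum_congr rfl fun j _ => ?_
            simp [hC0def, dif_pos j.2]
          rw [← h1, ← h2, h3, hc0]
        have hC0i₀ : C0 (i₀ : Fin r) ≠ 0 := by
          simpa [hC0def, dif_pos i₀.2] using hi₀
        rcases lt_or_gt_of_ne hC0i₀ with hneg | hpos
        · refine ⟨fun j => -C0 j, fun j hj => hsupp0 j (by simpa using hj), ?_, i₀,
            by simpa using neg_pos.mpr hneg⟩
          simp only [neg_smul, Finset.sum_neg_distrib, hsum0, neg_zero]
        · exact ⟨C0, hsupp0, hsum0, i₀, hpos⟩
      -- step: reduce the support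
      set T : Finset (Fin r) := univ.filter (fun j => 0 < C j) with hTdef
      have hTne : T.Nonempty := ⟨j₁, by simp [hTdef, hj₁]⟩
      set t0 : ℝ := T.inf' hTne (fun j => ν j / C j) with ht0
      obtain ⟨j₀, hj₀T, hj₀⟩ := Finset.exists_mem_eq_inf' hTne (fun j => ν j / C j)
      have hCj₀ : 0 < C j₀ := by simpa [hTdef] using hj₀T
      have hνj₀ : ν j₀ ≠ 0 := hCsupp j₀ (ne_of_gt hCj₀)
      have hj₀s : j₀ ∈ s := hsupp j₀ hνj₀
      have ht0nn : 0 ≤ t0 := by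
        rw [ht0, hj₀]; exact div_nonneg (hν j₀) hCj₀.le
      set ν₂ : Fin r → ℝ := fun j => ν j - t0 * C j with hν₂def
      have hν₂nn : ∀ j, 0 ≤ ν₂ j := by
        intro j
        by_cases hCj : 0 < C j
        · have h1 : t0 ≤ ν j / C j := Finset.inf'_le _ (by simp [hTdef, hCj])
          have h2 : t0 * C j ≤ ν j := (le_div_iff₀ hCj).mp h1
          simp [hν₂def]; linarith
        · push_neg at hCj
          have : t0 * C j ≤ 0 := mul_nonpos_of_nonneg_of_nonpos ht0nn hCj
          simp [hν₂def]; linarith [hν j]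
      have hν₂j₀ : ν₂ j₀ = 0 := by
        have : t0 = ν j₀ / C j₀ := hj₀
        simp [hν₂def, this, div_mul_cancel₀ _ (ne_of_gt hCj₀)]
      have hν₂supp : ∀ j, ν₂ j ≠ 0 → j ∈ s.erase j₀ := by
        intro j hj
        have hνj : ν j ≠ 0 := by
          intro h0
          rcases eq_or_ne (C j) 0 with hC | hC
          · exact hj (by simp [hν₂def, h0, hC])
          · exact hCsupp j hC h0
        refine Finset.mem_erase.mpr ⟨?_, hsupp j hνj⟩
        intro hEq; rw [hEq] at hj; exact hj hν₂j₀
      have hsum₂ : ∑ j, ν₂ j • a j = ∑ j, ν j • a j := by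
        have : ∑ j, (t0 * C j) • a j = 0 := by
          simp_rw [mul_smul, ← Finset.smul_sum, hCsum, smul_zero]
        simp [hν₂def, sub_smul, Finset.sum_sub_distrib, this]
      obtain ⟨t, hts, hind', ν', h1, h2, h3⟩ :=
        ih (s.erase j₀) (Finset.erase_ssubset hj₀s) ν₂ hν₂nn hν₂supp
      exact ⟨t, hts.trans (Finset.erase_subset _ _), hind', ν', h1, h2, h3.trans hsum₂⟩

open scoped RealInnerProductSpace

/-- a uniform generalized Farkas bound for a convex polyhedron:
every normal is a nonnegative combination of active constraint vectors with
coefficient sum bounded by β‖μ‖, uniformly in the point and the normal. -/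
theorem polyhedron_uniform_farkas {p r : ℕ}
    (a : Fin r → EuclideanSpace ℝ (Fin p)) (b : Fin r → ℝ)
    (Q : Set (EuclideanSpace ℝ (Fin p)))
    (hQ : Q = {d | ∀ j, ⟪a j, d⟫ ≤ b j}) :
    ∃ β : ℝ, 0 ≤ β ∧ ∀ d ∈ Q, ∀ μ : EuclideanSpace ℝ (Fin p),
      (∀ d' ∈ Q, ⟪μ, d' - d⟫ ≤ (0 : ℝ)) →
      ∃ ν : Fin r → ℝ, (∀ j, 0 ≤ ν j) ∧
        (∀ j, ν j ≠ 0 → ⟪a j, d⟫ = b j) ∧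
        μ = ∑ j, ν j • a j ∧ ∑ j, ν j ≤ β * ‖μ‖ := by
  classical
  -- choose uniform constants for each linearly independent subfamily
  have hchoice : ∀ t : Finset (Fin r), ∃ c : ℝ, 0 ≤ c ∧
      (LinearIndependent ℝ (fun j : ↥t => a j) →
        ∀ g : ↥t → ℝ, ‖g‖ ≤ c * ‖∑ i : ↥t, g i • a (i : Fin r)‖) := by
    intro t
    by_cases h : LinearIndependent ℝ (fun j : ↥t => a j)
    · obtain ⟨c, hc0, hc⟩ := pufCombMap_bound _ h
      exact ⟨c, hc0, fun _ g => hc g⟩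
    · exact ⟨0, le_rfl, fun h' => absurd h' h⟩
  choose cst hcst0 hcst using hchoice
  refine ⟨∑ t : Finset (Fin r), (r : ℝ) * cst t,
    Finset.sum_nonneg (fun t _ => mul_nonneg (Nat.cast_nonneg r) (hcst0 t)), ?_⟩
  intro d hd μ hμ
  set J : Finset (Fin r) := Finset.univ.filter (fun j => ⟪a j, d⟫ = b j) with hJ
  set C : Set (EuclideanSpace ℝ (Fin p)) :=
    {x | ∃ ν : Fin r → ℝ, (∀ j, 0 ≤ ν j) ∧ (∀ j, ν j ≠ 0 → j ∈ J) ∧ x = ∑ j, ν j • a j}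
    with hC
  have hd' : ∀ j, ⟪a j, d⟫ ≤ b j := by rw [hQ] at hd; exact hd
  have hC0 : (0 : EuclideanSpace ℝ (Fin p)) ∈ C :=
    ⟨fun _ => 0, fun _ => le_rfl, fun j hj => absurd rfl hj, by simp⟩
  -- Farkas: μ lies in the cone C of active constraint vectors
  have hμC : μ ∈ C := by
    by_contra hμC
    have hCclosed : IsClosed C := by
      have himg : C = ⋃ (t : Finset (Fin r)) (_ : t ∈ (J.powerset.filter
            (fun t' : Finset (Fin r) => LinearIndependent ℝ (fun j : ↥t' => a j)))),
          {x : EuclideanSpace ℝ (Fin p) |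
            ∃ g : ↥t → ℝ, (∀ i, 0 ≤ g i) ∧ x = ∑ i, g i • a (i : Fin r)} := by
        ext x
        simp only [Set.mem_iUnion, Finset.mem_filter, Finset.mem_powerset, Set.mem_setOf_eq]
        constructor
        · rintro ⟨ν, hν0, hνJ, rfl⟩
          obtain ⟨t, htJ, hind, ν', h0, hsuppt, hsum⟩ := puf_caratheodory a J ν hν0 hνJ
          refine ⟨t, ⟨htJ, hind⟩, fun i => ν' i, fun i => h0 _, ?_⟩
          have e1 : ∑ i : ↥t, ν' (i : Fin r) • a (i : Fin r) = ∑ j ∈ t, ν' j • a j :=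
            Finset.sum_coe_sort t (fun j => ν' j • a j)
          have e2 : ∑ j ∈ t, ν' j • a j = ∑ j, ν' j • a j :=
            Finset.sum_subset t.subset_univ (fun j _ hj => by
              have hz : ν' j = 0 := by by_contra h; exact hj (hsuppt j h)
              simp [hz])
          rw [e1, e2, hsum]
        · rintro ⟨t, ⟨htJ, _⟩, g, hg0, rfl⟩
          refine ⟨fun j => if h : j ∈ t then g ⟨j, h⟩ else 0, fun j => ?_, fun j hj => ?_, ?_⟩
          · by_cases h : j ∈ t
            · simpa [dif_pos h] using hg0 ⟨j, h⟩
            · simp [dif_neg h]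
          · have hjt : j ∈ t := by by_contra h; simp [dif_neg h] at hj
            exact htJ hjt
          · have e2 : ∑ j, (if h : j ∈ t then g ⟨j, h⟩ else 0) • a j
                = ∑ j ∈ t, (if h : j ∈ t then g ⟨j, h⟩ else 0) • a j :=
              (Finset.sum_subset t.subset_univ (fun j _ hj => by simp [dif_neg hj])).symm
            have e1 : ∑ j ∈ t, (if h : j ∈ t then g ⟨j, h⟩ else 0) • a j
                = ∑ i : ↥t, (if h : (i : Fin r) ∈ t then g ⟨i, h⟩ else 0) • a (i : Fin r) :=
              (Finset.sum_coe_sort t _).symm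
            rw [e2, e1]
            exact (Finset.sum_congr rfl fun i _ => by simp [dif_pos i.2]).symm
      rw [himg]
      refine Set.Finite.isClosed_biUnion (Finset.finite_toSet _) (fun t ht => ?_)
      exact pufCombMap_isClosed _ ((Finset.mem_filter.mp ht).2)
    have hCconv : Convex ℝ C := by
      rintro x ⟨ν1, h10, h1J, rfl⟩ y ⟨ν2, h20, h2J, rfl⟩ α β hα hβ hαβ
      refine ⟨fun j => α * ν1 j + β * ν2 j,
        fun j => add_nonneg (mul_nonneg hα (h10 j)) (mul_nonneg hβ (h20 j)),
        fun j hj => ?_, ?_⟩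
      · by_contra hmem
        have h1 : ν1 j = 0 := by by_contra hh; exact hmem (h1J j hh)
        have h2 : ν2 j = 0 := by by_contra hh; exact hmem (h2J j hh)
        exact hj (by simp [h1, h2])
      · simp [Finset.smul_sum, add_smul, mul_smul, Finset.sum_add_distrib]
    obtain ⟨f, u, hfC, hfμ⟩ := geometric_hahn_banach_closed_point hCconv hCclosed hμC
    have hu : 0 < u := by have := hfC 0 hC0; simpa using this
    have hfnonpos : ∀ x ∈ C, f x ≤ 0 := by
      intro x hx
      by_contra h
      push_neg at h
      have hscale : ∀ s : ℝ, 0 ≤ s → s • x ∈ C := by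
        intro s hs
        obtain ⟨ν, hν0, hνJ, rfl⟩ := hx
        exact ⟨fun j => s * ν j, fun j => mul_nonneg hs (hν0 j),
          fun j hj => hνJ j (fun h0 => hj (by simp [h0])),
          by simp [Finset.smul_sum, mul_smul]⟩
      have h2 := hfC (((u + 1) / f x) • x) (hscale _ (div_nonneg (by linarith) h.le))
      rw [map_smul, smul_eq_mul, div_mul_cancel₀ _ (ne_of_gt h)] at h2
      linarith
    set v : EuclideanSpace ℝ (Fin p) :=
      (InnerProductSpace.toDual ℝ (EuclideanSpace ℝ (Fin p))).symm f with hvdef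
    have hv : ∀ x, ⟪v, x⟫ = f x := fun x => InnerProductSpace.toDual_symm_apply
    have haj : ∀ j ∈ J, ⟪a j, v⟫ ≤ 0 := by
      intro j hjJ
      have hajC : a j ∈ C := by
        refine ⟨fun j' => if j' = j then 1 else 0, fun j' => by positivity,
          fun j' hj' => ?_, ?_⟩
        · have : j' = j := by by_contra h; simp [h] at hj'
          rwa [this]
        · simp [ite_smul]
      have := hfnonpos (a j) hajC
      rw [real_inner_comm, hv]
      exact this
    have hμv : 0 < ⟪v, μ⟫ := by rw [hv]; linarith
    set T : Finset (Fin r) := Finset.univ.filter (fun j => ¬(⟪a j, d⟫ = b j)) with hTdef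
    set ε : ℝ := if hne : T.Nonempty
      then min 1 (T.inf' hne (fun j => (b j - ⟪a j, d⟫) / (1 + ‖a j‖ * ‖v‖)))
      else 1 with hεdef
    have hεpos : 0 < ε := by
      rw [hεdef]
      split
      · rename_i hne
        refine lt_min one_pos ?_
        rw [Finset.lt_inf'_iff]
        intro j hj
        have hjd : ⟪a j, d⟫ < b j := lt_of_le_of_ne (hd' j) (by simpa [hTdef] using hj)
        apply div_pos (by linarith)
        positivity
      · exact one_pos
    have hdQ' : d + ε • v ∈ Q := by
      rw [hQ]
      intro j
      rw [inner_add_right, real_inner_smul_right]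
      by_cases hj : ⟪a j, d⟫ = b j
      · have h1 : ⟪a j, v⟫ ≤ 0 := haj j (Finset.mem_filter.mpr ⟨Finset.mem_univ j, hj⟩)
        nlinarith
      · have hjT : j ∈ T := Finset.mem_filter.mpr ⟨Finset.mem_univ j, hj⟩
        have hjd : ⟪a j, d⟫ < b j := lt_of_le_of_ne (hd' j) hj
        have hcs : ⟪a j, v⟫ ≤ ‖a j‖ * ‖v‖ := real_inner_le_norm _ _
        have hεle : ε ≤ (b j - ⟪a j, d⟫) / (1 + ‖a j‖ * ‖v‖) := by
          rw [hεdef, dif_pos ⟨j, hjT⟩]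
          exact (min_le_right _ _).trans (Finset.inf'_le _ hjT)
        have hden : (0 : ℝ) < 1 + ‖a j‖ * ‖v‖ := by positivity
        have hmul : ε * (1 + ‖a j‖ * ‖v‖) ≤ b j - ⟪a j, d⟫ := by
          rw [← le_div_iff₀ hden]; exact hεle
        nlinarith [mul_le_mul_of_nonneg_left hcs hεpos.le]
    have hcontr := hμ (d + ε • v) hdQ'
    rw [add_sub_cancel_left, real_inner_smul_right] at hcontr
    have hμvc : 0 < ⟪μ, v⟫ := by rw [real_inner_comm]; exact hμv
    nlinarith
  -- extract a Carathéodory representation and bound the coefficients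
  obtain ⟨ν0, hν00, hν0J, hμeq⟩ := hμC
  obtain ⟨t, htJ, hind, ν, hν0, hνt, hνsum⟩ := puf_caratheodory a J ν0 hν00 hν0J
  refine ⟨ν, hν0, fun j hj => ?_, ?_, ?_⟩
  · have := htJ (hνt j hj)
    simpa [hJ] using this
  · rw [hμeq, ← hνsum]
  · have hsum_t : ∑ i : ↥t, ν (i : Fin r) • a (i : Fin r) = μ := by
      rw [Finset.sum_coe_sort t (fun j => ν j • a j)]
      rw [Finset.sum_subset t.subset_univ (fun j _ hj => by
        have hz : ν j = 0 := by by_contra h; exact hj (hνt j h)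
        simp [hz])]
      rw [hνsum, ← hμeq]
    have hg := hcst t hind (fun i => ν (i : Fin r))
    rw [hsum_t] at hg
    have hcard : (t.card : ℝ) ≤ (r : ℝ) := by
      exact_mod_cast (Finset.card_le_univ t).trans_eq (by simp)
    calc ∑ j, ν j = ∑ j ∈ t, ν j :=
          (Finset.sum_subset t.subset_univ (fun j _ hj => by
            by_contra h; exact hj (hνt j h))).symm
      _ = ∑ i : ↥t, ν (i : Fin r) := (Finset.sum_coe_sort t ν).symm
      _ ≤ ∑ _i : ↥t, ‖fun i : ↥t => ν (i : Fin r)‖ := by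
          refine Finset.sum_le_sum fun i _ => ?_
          exact (le_abs_self _).trans (norm_le_pi_norm (fun i : ↥t => ν (i : Fin r)) i)
      _ = (t.card : ℝ) * ‖fun i : ↥t => ν (i : Fin r)‖ := by
          rw [Finset.sum_const, nsmul_eq_mul]
          simp
      _ ≤ (r : ℝ) * (cst t * ‖μ‖) := by
          refine mul_le_mul hcard hg (norm_nonneg _) (Nat.cast_nonneg r)
      _ = ((r : ℝ) * cst t) * ‖μ‖ := by ring
      _ ≤ (∑ t' : Finset (Fin r), (r : ℝ) * cst t') * ‖μ‖ := by
          refine mul_le_mul_of_nonneg_right ?_ (norm_nonneg μ)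
          exact Finset.single_le_sum (f := fun t' => (r : ℝ) * cst t')
            (fun t' _ => mul_nonneg (Nat.cast_nonneg r) (hcst0 t')) (Finset.mem_univ t)
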